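/- arXiv:2312.13861 — 4 statements merged into one kernel-verified Lean document; each statement's English description precedes it below -/
import Mathlib

section
/- Let S be a finite set with |S| = n ≥ 1 and let S_1, ..., S_n be subsets of S such that S_i ∩ S_j ≠ ∅ for all i ≠ j, and such that every element s ∈ S belongs to at most r of the subsets S_1, ..., S_n (with r ≥ 1). Then r ≥ √n. -/
theorem stmt_0 {α : Type*} [DecidableEq α] (S : Finset α) (n : ℕ) (hn : 1 ≤ n)
    (hS : S.card = n) (f : Fin n → Finset α) (hsub : ∀ i, f i ⊆ S)
    (hint : ∀ i j : Fin n, i ≠ j → (f i ∩ f j).Nonempty)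
    (r : ℕ) (hr : 1 ≤ r)
    (hcount : ∀ s ∈ S, (Finset.univ.filter (fun i : Fin n => s ∈ f i)).card ≤ r) :
    Real.sqrt n ≤ r := by
  have key : n ≤ r * r := by
    rcases eq_or_lt_of_le hn with h1 | h2
    · have := Nat.mul_le_mul hr hr; omega
    -- n ≥ 2
    -- Step 1: sum of cards ≤ r * n
    have hsum : ∑ i : Fin n, (f i).card ≤ ∑ _i : Fin n, r := by
      have e : ∀ i : Fin n, (f i).card = ∑ s ∈ S, (if s ∈ f i then 1 else 0) := by
        intro i
        rw [← Finset.card_filter]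
        congr 1
        rw [Finset.filter_mem_eq_inter, Finset.inter_eq_right.mpr (hsub i)]
      calc ∑ i : Fin n, (f i).card
          = ∑ i : Fin n, ∑ s ∈ S, (if s ∈ f i then 1 else 0) := by
            exact Finset.sum_congr rfl fun i _ => e i
        _ = ∑ s ∈ S, ∑ i : Fin n, (if s ∈ f i then 1 else 0) := Finset.sum_comm
        _ ≤ ∑ _s ∈ S, r := by
            refine Finset.sum_le_sum fun s hs => ?_
            have := hcount s hs
            rwa [Finset.card_filter] at this
        _ = n * r := by rw [Finset.sum_const, smul_eq_mul, hS]
        _ = ∑ _i : Fin n, r := by simp [mul_comm]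
    obtain ⟨i, -, hi⟩ := Finset.exists_le_of_sum_le
      (Finset.univ_nonempty_iff.mpr ⟨⟨0, by omega⟩⟩) hsum
    -- Step 2: univ ⊆ biUnion over s ∈ f i of indices containing s
    have hcov : (Finset.univ : Finset (Fin n)) ⊆
        (f i).biUnion (fun s => Finset.univ.filter (fun j : Fin n => s ∈ f j)) := by
      intro j _
      rcases eq_or_ne j i with rfl | hji
      · have hnt : Nontrivial (Fin n) := Fin.nontrivial_iff_two_le.mpr h2
        obtain ⟨j', hj'⟩ := exists_ne j
        obtain ⟨s, hs⟩ := hint j j' (Ne.symm hj')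
        simp only [Finset.mem_inter] at hs
        exact Finset.mem_biUnion.mpr ⟨s, hs.1, by simp [hs.1]⟩
      · obtain ⟨s, hs⟩ := hint i j (Ne.symm hji)
        simp only [Finset.mem_inter] at hs
        exact Finset.mem_biUnion.mpr ⟨s, hs.1, by simp [hs.2]⟩
    have hn' : n ≤ (f i).card * r := by
      calc n = (Finset.univ : Finset (Fin n)).card := by simp
        _ ≤ ((f i).biUnion (fun s => Finset.univ.filter (fun j : Fin n => s ∈ f j))).card :=
            Finset.card_le_card hcov
        _ ≤ ∑ s ∈ f i, (Finset.univ.filter (fun j : Fin n => s ∈ f j)).card :=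
            Finset.card_biUnion_le
        _ ≤ ∑ _s ∈ f i, r := Finset.sum_le_sum fun s hs => hcount s (hsub i hs)
        _ = (f i).card * r := by rw [Finset.sum_const, smul_eq_mul]
    calc n ≤ (f i).card * r := hn'
      _ ≤ r * r := Nat.mul_le_mul_right r hi
  have h2 : (n : ℝ) ≤ (r : ℝ) ^ 2 := by
    have := (Nat.cast_le (α := ℝ)).mpr key
    push_cast at this ⊢
    nlinarith
  have := Real.sqrt_le_sqrt h2
  rwa [Real.sqrt_sq (by positivity)] at this
end

section
/- Let S be a finite set with |S| = n ≥ 1 and let S_1, ..., S_n be subsets of S such that S_i ∩ S_j ≠ ∅ for all i ≠ j, and such that every element s ∈ S belongs to at most r of the subsets S_1, ..., S_n (with r ≥ 1). Then r(r−1) ≥ n−1. -/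
theorem stmt_2 {α : Type*} [DecidableEq α] (S : Finset α) (n : ℕ) (hn : 1 ≤ n)
    (hS : S.card = n) (f : Fin n → Finset α) (hsub : ∀ i, f i ⊆ S)
    (hint : ∀ i j : Fin n, i ≠ j → (f i ∩ f j).Nonempty)
    (r : ℕ) (hr : 1 ≤ r)
    (hcount : ∀ s ∈ S, (Finset.univ.filter (fun i : Fin n => s ∈ f i)).card ≤ r) :
    n - 1 ≤ r * (r - 1) := by
  -- Step 1: some set has cardinality ≤ r
  have key : ∑ i : Fin n, (f i).card ≤ ∑ _i : Fin n, r := by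
    have h1 : ∀ i : Fin n, (f i).card = ∑ s ∈ S, if s ∈ f i then 1 else 0 := by
      intro i
      rw [← Finset.card_filter]
      congr 1
      ext x
      simp only [Finset.mem_filter]
      exact ⟨fun h => ⟨hsub i h, h⟩, fun h => h.2⟩
    calc ∑ i : Fin n, (f i).card
        = ∑ i : Fin n, ∑ s ∈ S, if s ∈ f i then 1 else 0 := by
          exact Finset.sum_congr rfl (fun i _ => h1 i)
      _ = ∑ s ∈ S, ∑ i : Fin n, if s ∈ f i then 1 else 0 := Finset.sum_comm
      _ = ∑ s ∈ S, (Finset.univ.filter (fun i : Fin n => s ∈ f i)).card := by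
          exact Finset.sum_congr rfl (fun s _ => (Finset.card_filter _ _).symm)
      _ ≤ ∑ _s ∈ S, r := Finset.sum_le_sum (fun s hs => hcount s hs)
      _ = ∑ _i : Fin n, r := by simp [hS]
  have hne : (Finset.univ : Finset (Fin n)).Nonempty := ⟨⟨0, hn⟩, Finset.mem_univ _⟩
  obtain ⟨i, -, hi⟩ := Finset.exists_le_of_sum_le hne key
  -- Step 2: count the other indices via witnesses in f i
  have hsubset : (Finset.univ.erase i) ⊆
      (f i).biUnion (fun s => (Finset.univ.erase i).filter (fun j => s ∈ f j)) := by
    intro j hj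
    have hji : j ≠ i := Finset.ne_of_mem_erase hj
    obtain ⟨s, hs⟩ := hint i j (Ne.symm hji)
    simp only [Finset.mem_inter] at hs
    exact Finset.mem_biUnion.mpr ⟨s, hs.1, Finset.mem_filter.mpr ⟨hj, hs.2⟩⟩
  have hbound : ∀ s ∈ f i, ((Finset.univ.erase i).filter (fun j => s ∈ f j)).card ≤ r - 1 := by
    intro s hsin
    have hsS : s ∈ S := hsub i hsin
    have hsubf : (Finset.univ.erase i).filter (fun j => s ∈ f j) ⊆
        (Finset.univ.filter (fun j : Fin n => s ∈ f j)).erase i := by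
      intro j hj
      simp only [Finset.mem_filter, Finset.mem_erase, Finset.mem_univ, true_and] at *
      tauto
    have h2 := Finset.card_le_card hsubf
    have h3 : ((Finset.univ.filter (fun j : Fin n => s ∈ f j)).erase i).card
        = (Finset.univ.filter (fun j : Fin n => s ∈ f j)).card - 1 :=
      Finset.card_erase_of_mem (by simp [hsin])
    have h4 := hcount s hsS
    omega
  calc n - 1 = (Finset.univ.erase i).card := by
        rw [Finset.card_erase_of_mem (Finset.mem_univ i), Finset.card_univ, Fintype.card_fin]
    _ ≤ ((f i).biUnion (fun s => (Finset.univ.erase i).filter (fun j => s ∈ f j))).card :=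
        Finset.card_le_card hsubset
    _ ≤ ∑ s ∈ f i, ((Finset.univ.erase i).filter (fun j => s ∈ f j)).card :=
        Finset.card_biUnion_le
    _ ≤ ∑ _s ∈ f i, (r - 1) := Finset.sum_le_sum hbound
    _ = (f i).card * (r - 1) := by rw [Finset.sum_const, smul_eq_mul]
    _ ≤ r * (r - 1) := Nat.mul_le_mul_right _ hi
end

section
/- Let K_m be the complete simple graph on m ≥ 2 vertices with edge set E, and let E = E_1 ∪ ... ∪ E_n be a partition of E into n ≥ 1 parts. Let α = min_i (|E_i| · n / |E|) be the load balance and let RF = (∑_{i=1}^n |V(E_i)|) / m be the replication factor, where V(E_i) denotes the set of vertices incident to at least one edge of E_i. Then RF ≥ √α · √n · √((m−1)/m). -/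
theorem stmt_3 (m n : ℕ) (hm : 2 ≤ m) (hn : 1 ≤ n)
    (E : Fin n → Finset (Sym2 (Fin m)))
    (hdisj : ∀ i j : Fin n, i ≠ j → Disjoint (E i) (E j))
    (hcover : Finset.univ.biUnion E = (⊤ : SimpleGraph (Fin m)).edgeFinset)
    (α RF : ℝ)
    (hα : α = Finset.univ.inf'
      (Finset.univ_nonempty_iff.mpr ⟨⟨0, hn⟩⟩)
      (fun i : Fin n => ((E i).card : ℝ) * n / ((⊤ : SimpleGraph (Fin m)).edgeFinset.card : ℝ)))
    (hRF : RF = (∑ i : Fin n,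
      ((Finset.univ.filter (fun v : Fin m => ∃ e ∈ E i, v ∈ e)).card : ℝ)) / m) :
    Real.sqrt α * Real.sqrt n * Real.sqrt (((m : ℝ) - 1) / m) ≤ RF := by
  have hm0 : (0:ℝ) < m := by
    have : 0 < m := lt_of_lt_of_le (by norm_num) hm
    exact_mod_cast this
  have hn0 : (0:ℝ) < n := by exact_mod_cast hn
  have hm1 : (1:ℝ) ≤ m := by exact_mod_cast le_trans (by norm_num) hm
  -- total edge count
  have hEcard : (((⊤ : SimpleGraph (Fin m)).edgeFinset.card : ℝ)) = m * (m - 1) / 2 := by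
    rw [SimpleGraph.card_edgeFinset_top_eq_card_choose_two, Fintype.card_fin,
      Nat.cast_choose_two]
  have hEpos : (0:ℝ) < ((⊤ : SimpleGraph (Fin m)).edgeFinset.card : ℝ) := by
    rw [hEcard]
    have : (2:ℝ) ≤ m := by exact_mod_cast hm
    nlinarith
  -- α nonneg
  have hα0 : 0 ≤ α := by
    rw [hα]
    apply Finset.le_inf'
    intro i _
    positivity
  -- per-part edge count lower bound from α
  have hαle : ∀ i : Fin n, α * (m * (m-1) / 2) / n ≤ ((E i).card : ℝ) := by
    intro i
    have h1 : α ≤ ((E i).card : ℝ) * n / ((⊤ : SimpleGraph (Fin m)).edgeFinset.card : ℝ) := by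
      rw [hα]; exact Finset.inf'_le _ (Finset.mem_univ i)
    rw [hEcard] at h1
    have hM : (0:ℝ) < (m:ℝ) * ((m:ℝ)-1) / 2 := by rw [hEcard] at hEpos; exact hEpos
    rw [div_le_iff₀ hn0]
    exact (le_div_iff₀ hM).mp h1
  -- vertex sets
  set V : Fin n → Finset (Fin m) :=
    fun i => Finset.univ.filter (fun v : Fin m => ∃ e ∈ E i, v ∈ e) with hV
  -- combinatorial bound : |E i| ≤ choose (|V i|) 2
  have hcomb : ∀ i : Fin n, (E i).card ≤ ((V i).card).choose 2 := by
    intro i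
    rw [← Sym2.card_image_offDiag]
    apply Finset.card_le_card
    intro e he
    have heT : e ∈ (⊤ : SimpleGraph (Fin m)).edgeFinset := by
      rw [← hcover]
      exact Finset.mem_biUnion.mpr ⟨i, Finset.mem_univ i, he⟩
    induction e using Sym2.ind with
    | _ u v =>
      have huv : u ≠ v := by
        have := SimpleGraph.mem_edgeFinset.mp heT
        simpa [SimpleGraph.top_adj] using this
      have hu : u ∈ V i := by
        simp only [hV, Finset.mem_filter, Finset.mem_univ, true_and]
        exact ⟨s(u,v), he, Sym2.mem_mk_left u v⟩
      have hv : v ∈ V i := by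
        simp only [hV, Finset.mem_filter, Finset.mem_univ, true_and]
        exact ⟨s(u,v), he, Sym2.mem_mk_right u v⟩
      exact Finset.mem_image.mpr ⟨(u, v), Finset.mem_offDiag.mpr ⟨hu, hv, huv⟩, rfl⟩
  -- per-part vertex lower bound
  have hkey : ∀ i : Fin n, Real.sqrt (α * (m * (m-1)) / n) ≤ ((V i).card : ℝ) := by
    intro i
    have hk0 : (0:ℝ) ≤ ((V i).card : ℝ) := by positivity
    have h1 : ((E i).card : ℝ) ≤ ((V i).card : ℝ) * (((V i).card : ℝ) - 1) / 2 := by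
      have := hcomb i
      have h2 : ((E i).card : ℝ) ≤ (((V i).card).choose 2 : ℝ) := by exact_mod_cast this
      rwa [Nat.cast_choose_two] at h2
    have hsq : α * (m * (m-1)) / n ≤ ((V i).card : ℝ)^2 := by
      have h3 := hαle i
      have h4 : α * ((m:ℝ) * ((m:ℝ)-1)) / n = 2 * (α * ((m:ℝ) * ((m:ℝ)-1) / 2) / n) := by ring
      nlinarith [hk0, h1, h3]
    calc Real.sqrt (α * (m * (m-1)) / n) ≤ Real.sqrt (((V i).card : ℝ)^2) :=
          Real.sqrt_le_sqrt hsq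
      _ = ((V i).card : ℝ) := Real.sqrt_sq hk0
  -- sum up
  have hsum : (n : ℝ) * Real.sqrt (α * (m * (m-1)) / n) ≤ ∑ i : Fin n, ((V i).card : ℝ) := by
    calc (n : ℝ) * Real.sqrt (α * (m * (m-1)) / n)
        = ∑ _i : Fin n, Real.sqrt (α * (m * (m-1)) / n) := by
          rw [Finset.sum_const, Finset.card_univ, Fintype.card_fin, nsmul_eq_mul]
      _ ≤ ∑ i : Fin n, ((V i).card : ℝ) := Finset.sum_le_sum (fun i _ => hkey i)
  rw [hRF]
  have harg : α * n * (((m:ℝ) - 1) / m) = ((n:ℝ)/m)^2 * (α * (m * (m-1)) / n) := by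
    field_simp
  have hL : Real.sqrt α * Real.sqrt n * Real.sqrt (((m : ℝ) - 1) / m)
      = Real.sqrt (α * n * (((m:ℝ) - 1) / m)) := by
    rw [Real.sqrt_mul (by positivity : (0:ℝ) ≤ α * (n:ℝ)), Real.sqrt_mul hα0]
  have hR : (n : ℝ) * Real.sqrt (α * (m * (m-1)) / n) / m
      = Real.sqrt (α * n * (((m:ℝ) - 1) / m)) := by
    rw [harg, Real.sqrt_mul (sq_nonneg _), Real.sqrt_sq (by positivity : (0:ℝ) ≤ (n:ℝ)/m)]
    ring
  calc Real.sqrt α * Real.sqrt n * Real.sqrt (((m : ℝ) - 1) / m)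
      = (n : ℝ) * Real.sqrt (α * (m * (m-1)) / n) / m := by rw [hL, hR]
    _ ≤ (∑ i : Fin n, ((V i).card : ℝ)) / m := by
        exact (div_le_div_iff_of_pos_right hm0).mpr hsum
end

section
/- Let F be a finite field. There exists an injective map φ from the set of projective lines of the projective plane P²(F) to the set of points of P²(F) such that for every line L, the point φ(L) lies on L. -/
open LinearAlgebra.Projectivization Matrix Finset

theorem stmt_14 (F : Type*) [Field F] [Fintype F] :
    ∃ φ : ℙ F (Fin 3 → F) → ℙ F (Fin 3 → F),
      Function.Injective φ ∧ ∀ L : ℙ F (Fin 3 → F), (φ L).rep ⬝ᵥ L.rep = 0 := by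
  classical
  set q := Fintype.card F with hq
  have hq2 : 2 ≤ q := Fintype.one_lt_card
  haveI : Finite (ℙ F (Fin 3 → F)) := Quotient.finite _
  haveI : Fintype (ℙ F (Fin 3 → F)) := Fintype.ofFinite _
  -- key counting lemma
  have key : ∀ v : Fin 3 → F, v ≠ 0 →
      (q - 1) * (univ.filter fun y : ℙ F (Fin 3 → F) => y.rep ⬝ᵥ v = 0).card = q ^ 2 - 1 := by
    intro v hv
    set f : (Fin 3 → F) →ₗ[F] F :=
      { toFun := fun w => w ⬝ᵥ v
        map_add' := fun a b => add_dotProduct a b v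
        map_smul' := fun c a => smul_dotProduct c a v } with hf
    have hfne : ∃ w, f w ≠ 0 := by
      obtain ⟨i, hi⟩ := Function.ne_iff.mp hv
      refine ⟨Pi.single i 1, ?_⟩
      rw [hf]
      show Pi.single i 1 ⬝ᵥ v ≠ 0
      rw [single_dotProduct, one_mul]
      simpa using hi
    have hsurj : LinearMap.range f = ⊤ := by
      obtain ⟨w, hw⟩ := hfne
      rw [LinearMap.range_eq_top]
      intro c
      refine ⟨(c * (f w)⁻¹) • w, ?_⟩
      rw [f.map_smul, smul_eq_mul, mul_assoc, inv_mul_cancel₀ hw, mul_one]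
    have hrank : Module.finrank F (LinearMap.ker f) = 2 := by
      have h := LinearMap.finrank_range_add_finrank_ker f
      rw [hsurj, finrank_top] at h
      simp [Module.finrank_fin_fun, Module.finrank_self] at h
      omega
    have hcardker : Fintype.card (LinearMap.ker f) = q ^ 2 := by
      rw [Module.card_eq_pow_finrank (K := F), hrank]
    -- the finset of vectors orthogonal to v
    set A : Finset (Fin 3 → F) := univ.filter fun w => w ⬝ᵥ v = 0 with hA
    have hAcard : A.card = q ^ 2 := by
      rw [hA, ← Fintype.card_subtype]
      rw [← hcardker]
      exact Fintype.card_congr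
        (Equiv.subtypeEquivRight fun w => (LinearMap.mem_ker (f := f)).symm)
    have h0A : (0 : Fin 3 → F) ∈ A := by simp [hA]
    have hA' : (univ.filter fun w : Fin 3 → F => w ⬝ᵥ v = 0 ∧ w ≠ 0) = A.erase 0 := by
      ext w
      simp [hA, Finset.mem_erase, and_comm]
    -- the bijection
    have e : (Fˣ × {y : ℙ F (Fin 3 → F) // y.rep ⬝ᵥ v = 0}) ≃
        {w : Fin 3 → F // w ⬝ᵥ v = 0 ∧ w ≠ 0} := by
      refine Equiv.ofBijective
        (fun p => ⟨(p.1 : F) • p.2.1.rep, ?_, ?_⟩) ⟨?_, ?_⟩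
      · rw [smul_dotProduct, p.2.2, smul_zero]
      · exact smul_ne_zero (Units.ne_zero _) (Projectivization.rep_nonzero _)
      · rintro ⟨c, y, hy⟩ ⟨c', y', hy'⟩ h
        have h' : (c : F) • y.rep = (c' : F) • y'.rep := congrArg Subtype.val h
        have hyy : y = y' := by
          have : Projectivization.mk F y.rep (Projectivization.rep_nonzero y) = Projectivization.mk F y'.rep (Projectivization.rep_nonzero y') := by
            rw [Projectivization.mk_eq_mk_iff']
            exact ⟨(c : F)⁻¹ * c', by
              rw [mul_smul, ← h', ← mul_smul, inv_mul_cancel₀ (Units.ne_zero c), one_smul]⟩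
          rwa [Projectivization.mk_rep, Projectivization.mk_rep] at this
        subst hyy
        have hcc : (c : F) = c' := by
          have h2 : ((c : F) - c') • y.rep = 0 := by
            rw [sub_smul, h', sub_self]
          have h3 := (smul_eq_zero.mp h2).resolve_right (Projectivization.rep_nonzero y)
          exact sub_eq_zero.mp h3
        simp [Prod.ext_iff, Subtype.ext_iff, Units.ext_iff, hcc]
      · rintro ⟨w, hw0, hwne⟩
        have hmk : Projectivization.mk F (Projectivization.mk F w hwne).rep (Projectivization.rep_nonzero _) = Projectivization.mk F w hwne := Projectivization.mk_rep _
        obtain ⟨a, ha⟩ := (Projectivization.mk_eq_mk_iff F _ _ (Projectivization.rep_nonzero _) hwne).mp hmk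
        have hrep : (Projectivization.mk F w hwne).rep ⬝ᵥ v = 0 := by
          rw [← ha, smul_dotProduct, hw0]
          simp
        refine ⟨⟨a⁻¹, ⟨Projectivization.mk F w hwne, hrep⟩⟩, ?_⟩
        apply Subtype.ext
        show (a⁻¹ : Fˣ) • (Projectivization.mk F w hwne).rep = w
        rw [← ha, smul_smul]
        simp
    have hcards := Fintype.card_congr e
    rw [Fintype.card_prod, Fintype.card_units, Fintype.card_subtype,
      Fintype.card_subtype, hA'] at hcards
    rw [hcards, Finset.card_erase_of_mem h0A, hAcard]
  -- setup for Hall's theorem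
  set t : ℙ F (Fin 3 → F) → Finset (ℙ F (Fin 3 → F)) :=
    fun L => univ.filter fun P => P.rep ⬝ᵥ L.rep = 0 with ht
  have hq1 : 0 < q - 1 := by omega
  have hconst : ∀ L L' : ℙ F (Fin 3 → F), (t L).card = (t L').card := by
    intro L L'
    have h1 := key L.rep (Projectivization.rep_nonzero L)
    have h2 := key L'.rep (Projectivization.rep_nonzero L')
    exact Nat.eq_of_mul_eq_mul_left hq1 (h1.trans h2.symm)
  have hpos : ∀ L : ℙ F (Fin 3 → F), 0 < (t L).card := by
    intro L
    have h1 : (q - 1) * (t L).card = q ^ 2 - 1 := key L.rep (Projectivization.rep_nonzero L)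
    have hq4 : 2 ^ 2 ≤ q ^ 2 := Nat.pow_le_pow_left hq2 2
    refine Nat.pos_of_ne_zero fun h0 => ?_
    rw [h0, mul_zero] at h1
    omega
  have hall : ∀ s : Finset (ℙ F (Fin 3 → F)), s.card ≤ (s.biUnion t).card := by
    intro s
    set B := s.biUnion t with hB
    -- fix some line to get the common degree D
    obtain ⟨L₀⟩ : Nonempty (ℙ F (Fin 3 → F)) := by
      refine ⟨Projectivization.mk F (Pi.single 0 1) ?_⟩
      intro h
      have := congrFun h 0
      simp at this
    set D := (t L₀).card with hD
    have hDpos : 0 < D := hpos L₀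
    have step : s.card * D ≤ B.card * D := by
      calc s.card * D = ∑ _a ∈ s, D := by rw [Finset.sum_const, smul_eq_mul]
        _ = ∑ a ∈ s, (t a).card := by
            exact Finset.sum_congr rfl fun a _ => (hconst L₀ a).symm ▸ rfl
        _ = ∑ a ∈ s, ∑ b ∈ B, (if b ∈ t a then 1 else 0) := by
            refine Finset.sum_congr rfl fun a ha => ?_
            rw [← Finset.card_filter]
            congr 1
            rw [Finset.filter_mem_eq_inter]
            exact (Finset.inter_eq_right.mpr (Finset.subset_biUnion_of_mem t ha)).symm
        _ = ∑ b ∈ B, ∑ a ∈ s, (if b ∈ t a then 1 else 0) := Finset.sum_comm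
        _ = ∑ b ∈ B, (s.filter fun a => b ∈ t a).card := by
            refine Finset.sum_congr rfl fun b _ => ?_
            rw [Finset.card_filter]
        _ ≤ ∑ b ∈ B, D := by
            refine Finset.sum_le_sum fun b _ => ?_
            have hsub : (s.filter fun a => b ∈ t a).card ≤
                (univ.filter fun a => b ∈ t a).card :=
              Finset.card_le_card (Finset.filter_subset_filter _ (Finset.subset_univ s))
            refine hsub.trans ?_
            have : (univ.filter fun a : ℙ F (Fin 3 → F) => b ∈ t a) = t b := by
              ext a
              simp only [ht, Finset.mem_filter, Finset.mem_univ, true_and]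
              exact ⟨fun h => by rw [dotProduct_comm]; exact h,
                fun h => by rw [dotProduct_comm]; exact h⟩
            rw [this]
            exact le_of_eq (hconst b L₀)
        _ = B.card * D := by rw [Finset.sum_const, smul_eq_mul]
    exact Nat.le_of_mul_le_mul_right step hDpos
  obtain ⟨φ, hinj, hmem⟩ := (Finset.all_card_le_biUnion_card_iff_exists_injective t).mp hall
  refine ⟨φ, hinj, fun L => ?_⟩
  have := hmem L
  rw [ht] at this
  simpa using (Finset.mem_filter.mp this).2
end
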